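/- Let V be a real vector space, W ⊆ V a subspace of finite dimension a, and R an associative unital ℝ-algebra. Let x be an element of the algebra (ExteriorAlgebra ℝ V) ⊗_ℝ R that lies in the ℝ-linear span of the set of elements (ι(w₁)·ι(w₂)) ⊗ r with w₁, w₂ ∈ W and r ∈ R, where ι : V → ExteriorAlgebra ℝ V is the canonical inclusion. Then x^N = 0 for every integer N > a. -/
import Mathlib

open TensorProduct Pointwise

set_option synthInstance.maxHeartbeats 1000000 in
lemma exterior_prod_list_eq_zero
    (V : Type*) [AddCommGroup V] [Module ℝ V]
    (W : Submodule ℝ V) [FiniteDimensional ℝ W]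
    (a : ℕ) (ha : Module.finrank ℝ W = a)
    (l : List V) (hl : ∀ w ∈ l, w ∈ W) (hlen : a < l.length) :
    (l.map (ExteriorAlgebra.ι ℝ)).prod = 0 := by
  have hval : (l.map (ExteriorAlgebra.ι ℝ)).prod
      = ExteriorAlgebra.ιMulti ℝ l.length l.get := by
    rw [ExteriorAlgebra.ιMulti_apply]
    conv_lhs => rw [← List.ofFn_get l]
    rw [List.map_ofFn]
    rfl
  rw [hval]
  apply AlternatingMap.map_linearDependent
  intro hli
  have hu : LinearIndependent ℝ (fun i : Fin l.length =>
      (⟨l.get i, hl _ (l.get_mem ..)⟩ : W)) := by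
    apply LinearIndependent.of_comp (W.subtype)
    exact hli
  have := hu.fintype_card_le_finrank
  simp [ha] at this
  omega

theorem pow_eq_zero_of_mem_span_exterior_deg_two
    (V : Type*) [AddCommGroup V] [Module ℝ V]
    (W : Submodule ℝ V) [FiniteDimensional ℝ W]
    (a : ℕ) (ha : Module.finrank ℝ W = a)
    (R : Type*) [Ring R] [Algebra ℝ R]
    (x : ExteriorAlgebra ℝ V ⊗[ℝ] R)
    (hx : x ∈ Submodule.span ℝ
      {y : ExteriorAlgebra ℝ V ⊗[ℝ] R | ∃ w₁ ∈ W, ∃ w₂ ∈ W, ∃ r : R,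
        y = (ExteriorAlgebra.ι ℝ w₁ * ExteriorAlgebra.ι ℝ w₂) ⊗ₜ[ℝ] r})
    (N : ℕ) (hN : a < N) :
    x ^ N = 0 := by
  set S : Set (ExteriorAlgebra ℝ V ⊗[ℝ] R) :=
    {y | ∃ w₁ ∈ W, ∃ w₂ ∈ W, ∃ r : R,
      y = (ExteriorAlgebra.ι ℝ w₁ * ExteriorAlgebra.ι ℝ w₂) ⊗ₜ[ℝ] r} with hS
  -- key: every element of S ^ n (n ≥ 1) has a nice product form
  have key : ∀ n : ℕ, 1 ≤ n → ∀ z ∈ S ^ n,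
      ∃ l : List V, l.length = 2 * n ∧ (∀ w ∈ l, w ∈ W) ∧
        ∃ r : R, z = (l.map (ExteriorAlgebra.ι ℝ)).prod ⊗ₜ[ℝ] r := by
    intro n hn
    induction n, hn using Nat.le_induction with
    | base =>
      intro z hz
      rw [pow_one] at hz
      obtain ⟨w₁, hw₁, w₂, hw₂, r, rfl⟩ := hz
      exact ⟨[w₁, w₂], rfl, by simp [hw₁, hw₂], r, by simp⟩
    | succ n hn ih =>
      intro z hz
      rw [pow_succ] at hz
      obtain ⟨z', hz', y, hy, rfl⟩ := Set.mem_mul.mp hz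
      obtain ⟨l, hlen, hlW, r, rfl⟩ := ih z' hz'
      obtain ⟨w₁, hw₁, w₂, hw₂, s, rfl⟩ := hy
      refine ⟨l ++ [w₁, w₂], by simp [hlen]; ring, ?_, r * s, ?_⟩
      · intro w hw
        rcases List.mem_append.mp hw with h | h
        · exact hlW w h
        · simp only [List.mem_cons, List.not_mem_nil, or_false] at h
          rcases h with rfl | rfl <;> assumption
      · rw [Algebra.TensorProduct.tmul_mul_tmul]
        simp [mul_assoc]
  have hmem : x ^ N ∈ (Submodule.span ℝ S) ^ N := Submodule.pow_mem_pow _ hx N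
  rw [Submodule.span_pow] at hmem
  have hzero : S ^ N ⊆ {0} := by
    intro z hz
    obtain ⟨l, hlen, hlW, r, rfl⟩ := key N (by omega) z hz
    have : (l.map (ExteriorAlgebra.ι ℝ)).prod = 0 :=
      exterior_prod_list_eq_zero V W a ha l hlW (by omega)
    simp [this]
  have : Submodule.span ℝ (S ^ N) ≤ ⊥ := by
    rw [← Submodule.span_zero_singleton (R := ℝ)]
    exact Submodule.span_mono hzero
  simpa using this hmem
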